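/- For each t ≥ 0, the substitution map f ↦ S_t f, with (S_t f)(z) = ψ_t(z) f(φ_t(z))/cosh(t), is an isometry of the Hardy space H² of the unit disk: ∫_0^{2π} |S_t f(e^{iθ})|² dθ = ∫_0^{2π} |f(e^{iθ})|² dθ. -/

import Mathlib

open Complex

/-- For each `t ≥ 0`, the substitution operator `f ↦ S_t f` with
`(S_t f)(z) = ψ_t(z) f(φ_t(z))/cosh t` is an isometry in the `H²` sense: the
boundary `L²` norm on the unit circle is preserved,
`∫₀^{2π} |S_t f(e^{iθ})|² dθ = ∫₀^{2π} |f(e^{iθ})|² dθ`,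
for `f` analytic on a neighborhood of the closed unit disk. -/
lemma key_exp (a θ : ℝ) (ha0 : 0 ≤ a) (ha1 : a < 1) :
    Complex.exp ((θ + 2 * Real.arctan (a * Real.sin θ / (1 - a * Real.cos θ)) : ℝ) * I)
      = (Complex.exp (θ * I) - a) / (1 - Complex.exp (θ * I) * a) := by
  set c := Real.cos θ with hc
  set s := Real.sin θ with hs
  have hden : (0:ℝ) < 1 - a * c := by
    have := Real.neg_one_le_cos θ
    have := Real.cos_le_one θ
    nlinarith
  set u : ℝ := a * s / (1 - a * c) with hu
  have hsc : s ^ 2 + c ^ 2 = 1 := Real.sin_sq_add_cos_sq θ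
  have h1u : (0:ℝ) < 1 + u ^ 2 := by positivity
  set z := Complex.exp (θ * I) with hz
  have hzcs : z = (c : ℂ) + (s : ℂ) * I := by
    rw [hz, Complex.exp_mul_I, hc, hs, Complex.ofReal_cos, Complex.ofReal_sin]
  have hz0 : z ≠ 0 := Complex.exp_ne_zero _
  have hza : 1 - z * (a : ℂ) ≠ 0 := by
    intro h
    have h2 : z * (a:ℂ) = 1 := by linear_combination -h
    have h3 : ‖z * a‖ = 1 := by rw [h2]; simp
    rw [norm_mul, hz, Complex.norm_exp_ofReal_mul_I, one_mul, Complex.norm_real, Real.norm_eq_abs,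
      _root_.abs_of_nonneg ha0] at h3
    linarith
  have hsplit : Complex.exp ((θ + 2 * Real.arctan u : ℝ) * I)
      = z * (Complex.exp ((Real.arctan u : ℝ) * I)) ^ 2 := by
    rw [sq, ← Complex.exp_add, hz, ← Complex.exp_add]
    congr 1
    push_cast
    ring
  have harct : Complex.exp ((Real.arctan u : ℝ) * I)
      = ((1 : ℂ) + u * I) / (Real.sqrt (1 + u ^ 2) : ℂ) := by
    rw [Complex.exp_mul_I, ← Complex.ofReal_cos, ← Complex.ofReal_sin,
      Real.cos_arctan, Real.sin_arctan]
    push_cast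
    ring
  have hsqrt : ((Real.sqrt (1 + u ^ 2) : ℂ)) ^ 2 = ((1 + u ^ 2 : ℝ) : ℂ) := by
    rw [← Complex.ofReal_pow, Real.sq_sqrt h1u.le]
  rw [hsplit, harct, div_pow, hsqrt]
  have h1uc : ((1 + u ^ 2 : ℝ) : ℂ) ≠ 0 := by exact_mod_cast h1u.ne'
  have hdenc : ((1 - a * c : ℝ) : ℂ) ≠ 0 := by exact_mod_cast hden.ne'
  have hI : (I : ℂ) ^ 2 = -1 := Complex.I_sq
  have hscc : ((s:ℂ)) ^ 2 + ((c:ℂ)) ^ 2 = 1 := by exact_mod_cast hsc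
  have step1 : (1 : ℂ) + (u : ℂ) * I = (z - a) / (z * ((1 - a * c : ℝ) : ℂ)) := by
    rw [eq_div_iff (mul_ne_zero hz0 hdenc), hzcs, hu]
    push_cast
    have hd : ((1:ℂ) - a * c) ≠ 0 := by exact_mod_cast hden.ne'
    field_simp
    linear_combination ((a:ℂ) - (a:ℂ)^2*(c:ℂ) + (a:ℂ)^2*(c:ℂ))*(s:ℂ)^2 * hI + ((a:ℂ)^2*(c:ℂ) - (a:ℂ) - (a:ℂ)^2*(c:ℂ)) * hscc
  -- now finish
  have hz2 : z ^ 2 + 1 = 2 * (c : ℂ) * z := by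
    rw [hzcs]
    linear_combination ((s:ℂ)^2) * hI - hscc
  have step2 : ((1 + u ^ 2 : ℝ) : ℂ) = ((1 - 2*a*c + a^2 : ℝ) : ℂ) / ((1 - a*c : ℝ):ℂ)^2 := by
    rw [eq_div_iff (pow_ne_zero 2 hdenc)]
    have : (1 + u ^ 2) * (1 - a*c)^2 = 1 - 2*a*c + a^2 := by
      rw [hu]
      field_simp
      linear_combination a^2 * hsc
    exact_mod_cast this
  rw [step1, step2]
  have hD : (0:ℝ) < 1 - 2*a*c + a^2 := by nlinarith [sq_nonneg (1 - a*c), sq_nonneg s, hsc, sq_nonneg (a - c)]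
  have hDc : ((1 - 2*a*c + a^2 : ℝ):ℂ) ≠ 0 := by exact_mod_cast hD.ne'
  push_cast
  have hd1 : (1:ℂ) - (a:ℂ)*(c:ℂ) ≠ 0 := by exact_mod_cast hden.ne'
  have hd2 : (1:ℂ) - 2*(a:ℂ)*(c:ℂ) + (a:ℂ)^2 ≠ 0 := by exact_mod_cast hD.ne'
  have e1 : z * (((z - (a:ℂ)) / (z * (1 - (a:ℂ)*(c:ℂ))))^2 / ((1 - 2*(a:ℂ)*(c:ℂ) + (a:ℂ)^2) / (1 - (a:ℂ)*(c:ℂ))^2))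
      = (z - (a:ℂ))^2 / (z * (1 - 2*(a:ℂ)*(c:ℂ) + (a:ℂ)^2)) := by
    field_simp
  rw [e1, div_eq_div_iff (mul_ne_zero hz0 hd2) hza]
  linear_combination (-(a:ℂ)) * (z - (a:ℂ)) * hz2

lemma key_deriv (a θ : ℝ) (ha0 : 0 ≤ a) (ha1 : a < 1) :
    HasDerivAt (fun x => x + 2 * Real.arctan (a * Real.sin x / (1 - a * Real.cos x)))
      ((1 - a^2) / (1 - 2*a*Real.cos θ + a^2)) θ := by
  have hden : ∀ x : ℝ, (0:ℝ) < 1 - a * Real.cos x := by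
    intro x
    have := Real.neg_one_le_cos x
    have := Real.cos_le_one x
    nlinarith
  have hD : (0:ℝ) < 1 - 2*a*Real.cos θ + a^2 := by
    nlinarith [Real.neg_one_le_cos θ, Real.cos_le_one θ]
  have num : HasDerivAt (fun x => a * Real.sin x) (a * Real.cos θ) θ :=
    (Real.hasDerivAt_sin θ).const_mul a
  have den : HasDerivAt (fun x => 1 - a * Real.cos x) (-(a * (-Real.sin θ))) θ :=
    ((Real.hasDerivAt_cos θ).const_mul a).const_sub 1
  have hdiv := num.div den (hden θ).ne'
  have harc := hdiv.arctan
  have hfinal := (hasDerivAt_id θ).add (harc.const_mul 2)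
  have hsc : Real.sin θ ^ 2 + Real.cos θ ^ 2 = 1 := Real.sin_sq_add_cos_sq θ
  have step2r : 1 + (a*Real.sin θ/(1-a*Real.cos θ))^2 = (1-2*a*Real.cos θ+a^2)/(1-a*Real.cos θ)^2 := by
    have h1 : ((1 - a*Real.cos θ)^2 : ℝ) ≠ 0 := pow_ne_zero 2 (hden θ).ne'
    rw [div_pow, one_add_div h1, div_left_inj' h1]
    linear_combination a^2 * hsc
  have h1u : (0:ℝ) < 1 + (a * Real.sin θ / (1 - a * Real.cos θ))^2 := by positivity
  convert hfinal using 1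
  case e'_4 => rfl
  case e'_5 => rfl
  case e'_8 => rfl
  simp only [Pi.div_apply]
  rw [step2r]
  have h2 : (1-2*a*Real.cos θ+a^2)/(1-a*Real.cos θ)^2 ≠ 0 := div_ne_zero hD.ne' (pow_ne_zero 2 (hden θ).ne')
  generalize hDD : 1 - 2*a*Real.cos θ + a^2 = D at *
  field_simp [(hden θ).ne', hD.ne']
  linear_combination hDD + 2*a^2 * hsc

theorem stmt12 (t : ℝ) (ht : 0 ≤ t) (f : ℂ → ℂ)
    (hf : ∀ z ∈ Metric.closedBall (0 : ℂ) 1, AnalyticAt ℂ f z) :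
    (∫ θ in (0 : ℝ)..(2 * Real.pi),
        ‖(1 / Real.cosh t) * (1 / (1 - Complex.exp (θ * I) * Real.tanh t)) *
          f ((Complex.exp (θ * I) - Real.tanh t) /
              (1 - Complex.exp (θ * I) * Real.tanh t))‖ ^ 2)
      = ∫ θ in (0 : ℝ)..(2 * Real.pi), ‖f (Complex.exp (θ * I))‖ ^ 2 := by
  set a := Real.tanh t with ha
  have ha0 : 0 ≤ a := by
    rw [ha, Real.tanh_eq_sinh_div_cosh]
    exact div_nonneg (Real.sinh_nonneg_iff.mpr ht) (Real.cosh_pos t).le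
  have ha1 : a < 1 := by
    rw [ha, Real.tanh_eq_sinh_div_cosh]
    exact (div_lt_one (Real.cosh_pos t)).mpr (Real.sinh_lt_cosh t)
  have hDpos : ∀ x : ℝ, (0:ℝ) < 1 - 2*a*Real.cos x + a^2 := fun x => by
    nlinarith [Real.neg_one_le_cos x, Real.cos_le_one x]
  have hcoshsq : (1/Real.cosh t)^2 = 1 - a^2 := by
    have h1 := Real.cosh_sq_sub_sinh_sq t
    have hc := (Real.cosh_pos t).ne'
    rw [ha, Real.tanh_eq_sinh_div_cosh]
    field_simp
    linarith
  have hderiv : ∀ x ∈ Set.uIcc (0:ℝ) (2*Real.pi),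
      HasDerivAt (fun x => x + 2 * Real.arctan (a * Real.sin x / (1 - a * Real.cos x)))
        ((1 - a^2) / (1 - 2*a*Real.cos x + a^2)) x := fun x _ => key_deriv a x ha0 ha1
  have hcont : ContinuousOn (fun x => (1 - a^2) / (1 - 2*a*Real.cos x + a^2))
      (Set.uIcc (0:ℝ) (2*Real.pi)) :=
    (Continuous.div continuous_const (by fun_prop) fun x => (hDpos x).ne').continuousOn
  have hg_cont : Continuous (fun u : ℝ => ‖f (Complex.exp (u * I))‖ ^ 2) := by
    rw [continuous_iff_continuousAt]
    intro x
    have hmem : Complex.exp ((x:ℂ) * I) ∈ Metric.closedBall (0:ℂ) 1 := by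
      simp [Metric.mem_closedBall, Complex.dist_eq, Complex.norm_exp_ofReal_mul_I]
    have hfc : ContinuousAt f (Complex.exp ((x:ℂ) * I)) := (hf _ hmem).continuousAt
    have hce : ContinuousAt (fun y : ℝ => Complex.exp ((y:ℂ) * I)) x :=
      (Complex.continuous_exp.comp (Complex.continuous_ofReal.mul continuous_const)).continuousAt
    have h2 : ContinuousAt (fun y : ℝ => f (Complex.exp ((y:ℂ) * I))) x :=
      ContinuousAt.comp (x := x) hfc hce
    have h3 : ContinuousAt (fun y : ℝ => ‖f (Complex.exp ((y:ℂ) * I))‖) x :=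
      ContinuousAt.comp (x := x) continuous_norm.continuousAt h2
    exact h3.pow 2
  have key := intervalIntegral.integral_comp_smul_deriv hderiv hcont hg_cont
  have e0 : (0:ℝ) + 2*Real.arctan (a * Real.sin 0 / (1 - a*Real.cos 0)) = 0 := by simp
  have e2 : 2*Real.pi + 2*Real.arctan (a * Real.sin (2*Real.pi) / (1 - a*Real.cos (2*Real.pi)))
      = 2*Real.pi := by simp [Real.sin_two_pi, Real.cos_two_pi]
  rw [e0, e2] at key
  rw [← key]
  apply intervalIntegral.integral_congr
  intro θ _
  simp only [Function.comp_apply, smul_eq_mul]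
  rw [key_exp a θ ha0 ha1]
  -- now pure pointwise computation
  set z := Complex.exp ((θ:ℂ) * I) with hz
  have hzcs : z = (Real.cos θ : ℂ) + (Real.sin θ : ℂ) * I := by
    rw [hz, Complex.exp_mul_I, Complex.ofReal_cos, Complex.ofReal_sin]
  have hsc : Real.sin θ ^ 2 + Real.cos θ ^ 2 = 1 := Real.sin_sq_add_cos_sq θ
  have habs : ‖1 - z * (a:ℂ)‖ ^ 2 = 1 - 2*a*Real.cos θ + a^2 := by
    have e : (1:ℂ) - z * (a:ℂ) = ((1 - a*Real.cos θ : ℝ):ℂ) + ((-(a*Real.sin θ) : ℝ):ℂ) * I := by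
      rw [hzcs]; push_cast; ring
    rw [e, Complex.sq_norm, Complex.normSq_add_mul_I]
    linear_combination a^2 * hsc
  simp only [norm_mul, norm_div, norm_one, Complex.norm_real, Real.norm_eq_abs]
  rw [_root_.abs_of_pos (Real.cosh_pos t), mul_pow, mul_pow, hcoshsq, div_pow, one_pow, habs]
  ring
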